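/- Let β > 0. For all v, v' ∈ ℝ³ with ‖v'‖ ≤ ‖v‖ one has λ(v') ≤ λ(v); in particular λ(v) ≥ λ(0) > 0 for every v ∈ ℝ³. -/

import Mathlib

open MeasureTheory

noncomputable section

abbrev E3 := EuclideanSpace ℝ (Fin 3)

/-- The Maxwellian density with inverse temperature `β` on `ℝ³`. -/
def Mβ (β : ℝ) (v : E3) : ℝ :=
  (β / (2 * Real.pi)) ^ ((3 : ℝ) / 2) * Real.exp (-(β / 2) * ‖v‖ ^ 2)

/-- The collision frequency `λ(v) = π ∫ M_β(w) ‖v − w‖ dw`. -/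
def lam (β : ℝ) (v : E3) : ℝ := Real.pi * ∫ w : E3, Mβ β w * ‖v - w‖

lemma Mβ_nonneg (β : ℝ) (hβ : 0 < β) (v : E3) : 0 ≤ Mβ β v := by
  unfold Mβ
  have : (0:ℝ) ≤ β / (2 * Real.pi) := by positivity
  positivity

lemma integrable_gauss (b : ℝ) (hb : 0 < b) :
    Integrable (fun w : E3 => Real.exp (-b * ‖w‖ ^ 2)) := by
  have h := (GaussianFourier.integrable_cexp_neg_mul_sq_norm_add (V := E3) (b := (b : ℂ))
    (by simpa using hb) 0 (0 : E3)).norm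
  simpa [Complex.norm_exp, neg_mul, ← Complex.ofReal_pow] using h

/-- Integrability of the integrand of `lam`. -/
lemma integrable_M_mul (β : ℝ) (hβ : 0 < β) (v : E3) :
    Integrable (fun w : E3 => Mβ β w * ‖v - w‖) := by
  set A : ℝ := (β / (2 * Real.pi)) ^ ((3 : ℝ) / 2) with hA
  have hA0 : 0 ≤ A := by
    have : (0:ℝ) ≤ β / (2 * Real.pi) := by positivity
    positivity
  have hcont : Continuous (fun w : E3 => Mβ β w * ‖v - w‖) := by
    unfold Mβ
    fun_prop
  refine Integrable.mono' ((integrable_gauss (β/4) (by positivity)).const_mul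
    (A * (1 + ‖v‖) * Real.exp (1/β))) hcont.aestronglyMeasurable
    (Filter.Eventually.of_forall fun w => ?_)
  have h1 : Mβ β w * ‖v - w‖ = |Mβ β w * ‖v - w‖| := by
    rw [abs_of_nonneg (mul_nonneg (Mβ_nonneg β hβ w) (norm_nonneg _))]
  rw [Real.norm_eq_abs, ← h1]
  have hvw : ‖v - w‖ ≤ ‖v‖ + ‖w‖ := norm_sub_le _ _
  have h2 : ‖v‖ + ‖w‖ ≤ (1 + ‖v‖) * Real.exp (‖w‖) := by
    have h3 : ‖w‖ ≤ Real.exp ‖w‖ := (Real.add_one_le_exp ‖w‖).trans' (by linarith)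
    have h4 : (1:ℝ) ≤ Real.exp ‖w‖ := Real.one_le_exp (norm_nonneg _)
    nlinarith [norm_nonneg (v : E3), norm_nonneg (w : E3)]
  have h5 : Real.exp (‖w‖) * Real.exp (-(β/2) * ‖w‖^2)
      ≤ Real.exp (1/β) * Real.exp (-(β/4) * ‖w‖^2) := by
    rw [← Real.exp_add, ← Real.exp_add]
    apply Real.exp_le_exp.2
    have h0 : (0:ℝ) < 4*β := by positivity
    have hkey : 4*β*‖w‖ ≤ 4*β*((β/4)*‖w‖^2 + 1/β) := by
      field_simp
      nlinarith [sq_nonneg (β * ‖w‖ - 2)]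
    have : ‖w‖ ≤ (β/4) * ‖w‖^2 + 1/β := le_of_mul_le_mul_left hkey h0
    nlinarith
  calc Mβ β w * ‖v - w‖ ≤ (A * Real.exp (-(β/2) * ‖w‖^2)) * ((1 + ‖v‖) * Real.exp ‖w‖) := by
        unfold Mβ
        rw [← hA]
        have hE : (0:ℝ) ≤ Real.exp (-(β/2) * ‖w‖^2) := Real.exp_nonneg _
        nlinarith [mul_nonneg hA0 hE, hvw.trans h2, norm_nonneg (v - w)]
    _ ≤ A * (1 + ‖v‖) * Real.exp (1/β) * Real.exp (-(β/4) * ‖w‖^2) := by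
        have hv1 : (0:ℝ) ≤ 1 + ‖v‖ := by positivity
        nlinarith [mul_nonneg hA0 hv1, h5, Real.exp_nonneg (-(β/2) * ‖w‖^2),
          Real.exp_nonneg ‖w‖]

/-- The integral only depends on the norm. -/
lemma int_symm (β : ℝ) {x y : E3} (h : ‖x‖ = ‖y‖) :
    ∫ w : E3, Mβ β w * ‖x - w‖ = ∫ w : E3, Mβ β w * ‖y - w‖ := by
  set R : E3 ≃ₗᵢ[ℝ] E3 := Submodule.reflection (ℝ ∙ (x - y))ᗮ with hR
  have hRx : R x = y := Submodule.reflection_sub h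
  have hMP : MeasurePreserving R volume volume := R.measurePreserving
  calc (∫ w : E3, Mβ β w * ‖x - w‖)
      = ∫ w : E3, Mβ β (R w) * ‖x - R w‖ := by
        rw [← hMP.integral_comp R.toHomeomorph.measurableEmbedding
          (fun w => Mβ β w * ‖x - w‖)]
    _ = ∫ w : E3, Mβ β w * ‖y - w‖ := by
        congr 1; funext w
        have h1 : Mβ β (R w) = Mβ β w := by unfold Mβ; rw [R.norm_map]
        have h2 : ‖x - R w‖ = ‖y - w‖ := by
          rw [← R.norm_map (x - R w), map_sub, hRx]
          congr 1
          exact congrArg (y - ·) (Submodule.reflection_reflection _ w)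
        rw [h1, h2]

lemma Mβ_pos (β : ℝ) (hβ : 0 < β) (v : E3) : 0 < Mβ β v := by
  unfold Mβ
  have h1 : (0:ℝ) < β / (2 * Real.pi) := by positivity
  positivity

/-- `I(0) ≤ I(v)` at the integral level. -/
lemma int_zero_le (β : ℝ) (hβ : 0 < β) (v : E3) :
    ∫ w : E3, Mβ β w * ‖(0:E3) - w‖ ≤ ∫ w : E3, Mβ β w * ‖v - w‖ := by
  have hIv := integrable_M_mul β hβ v
  have hIv' := integrable_M_mul β hβ (-v)
  have key : ∫ w : E3, Mβ β w * ‖(0:E3) - w‖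
      ≤ ∫ w : E3, ((1/2) * (Mβ β w * ‖v - w‖) + (1/2) * (Mβ β w * ‖(-v) - w‖)) := by
    refine integral_mono (integrable_M_mul β hβ 0)
      ((hIv.const_mul _).add (hIv'.const_mul _)) (fun w => ?_)
    have hpt : ‖(0:E3) - w‖ ≤ (1/2) * ‖v - w‖ + (1/2) * ‖(-v) - w‖ := by
      have : (0:E3) - w = (1/2 : ℝ) • (v - w) + (1/2 : ℝ) • ((-v) - w) := by
        module
      rw [this]
      calc ‖(1/2 : ℝ) • (v - w) + (1/2 : ℝ) • ((-v) - w)‖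
          ≤ ‖(1/2 : ℝ) • (v - w)‖ + ‖(1/2 : ℝ) • ((-v) - w)‖ := norm_add_le _ _
        _ = (1/2) * ‖v - w‖ + (1/2) * ‖(-v) - w‖ := by
            rw [norm_smul, norm_smul]; norm_num
    have hM := Mβ_nonneg β hβ w
    nlinarith [norm_nonneg ((0:E3) - w)]
  rw [integral_add (hIv.const_mul _) (hIv'.const_mul _), integral_const_mul,
    integral_const_mul] at key
  have hsym : ∫ w : E3, Mβ β w * ‖(-v) - w‖ = ∫ w : E3, Mβ β w * ‖v - w‖ :=
    int_symm β (norm_neg v)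
  rw [hsym] at key
  linarith

/-- The collision frequency is radially monotone: `‖v'‖ ≤ ‖v‖` implies `λ(v') ≤ λ(v)`;
in particular `λ(v) ≥ λ(0) > 0` for every `v`. -/
theorem lam_radially_monotone (β : ℝ) (hβ : 0 < β) :
    (∀ v v' : E3, ‖v'‖ ≤ ‖v‖ → lam β v' ≤ lam β v) ∧
    0 < lam β 0 ∧ ∀ v : E3, lam β 0 ≤ lam β v := by
  have hmono : ∀ v v' : E3, ‖v'‖ ≤ ‖v‖ → lam β v' ≤ lam β v := by
    intro v v' h
    unfold lam
    refine mul_le_mul_of_nonneg_left ?_ Real.pi_pos.le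
    by_cases hv : v = 0
    · have hv' : v' = 0 := by
        rw [hv] at h; simpa using norm_le_zero_iff.mp (by simpa using h)
      rw [hv, hv']
    · set s : ℝ := ‖v'‖ / ‖v‖ with hs
      have hvn : (0:ℝ) < ‖v‖ := norm_pos_iff.mpr hv
      have hs0 : 0 ≤ s := by positivity
      have hs1 : s ≤ 1 := (div_le_one hvn).mpr h
      have hnorm : ‖v'‖ = ‖s • v‖ := by
        rw [norm_smul, Real.norm_eq_abs, abs_of_nonneg hs0, hs,
          div_mul_cancel₀ _ (ne_of_gt hvn)]
      rw [int_symm β hnorm]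
      have hIv := integrable_M_mul β hβ v
      have hI0 := integrable_M_mul β hβ 0
      have key : ∫ w : E3, Mβ β w * ‖s • v - w‖
          ≤ ∫ w : E3, (s * (Mβ β w * ‖v - w‖) + (1 - s) * (Mβ β w * ‖(0:E3) - w‖)) := by
        refine integral_mono (integrable_M_mul β hβ (s • v))
          ((hIv.const_mul _).add (hI0.const_mul _)) (fun w => ?_)
        have hpt : ‖s • v - w‖ ≤ s * ‖v - w‖ + (1 - s) * ‖(0:E3) - w‖ := by
          have : s • v - w = s • (v - w) + (1 - s) • ((0:E3) - w) := by
            module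
          rw [this]
          calc ‖s • (v - w) + (1 - s) • ((0:E3) - w)‖
              ≤ ‖s • (v - w)‖ + ‖(1 - s) • ((0:E3) - w)‖ := norm_add_le _ _
            _ = s * ‖v - w‖ + (1 - s) * ‖(0:E3) - w‖ := by
                rw [norm_smul, norm_smul, Real.norm_eq_abs, Real.norm_eq_abs,
                  abs_of_nonneg hs0, abs_of_nonneg (by linarith : (0:ℝ) ≤ 1 - s)]
        have hM := Mβ_nonneg β hβ w
        nlinarith [norm_nonneg (s • v - w)]
      rw [integral_add (hIv.const_mul _) (hI0.const_mul _), integral_const_mul,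
        integral_const_mul] at key
      have h0le := int_zero_le β hβ v
      nlinarith
  refine ⟨hmono, ?_, fun v => hmono v 0 (by simp)⟩
  unfold lam
  refine mul_pos Real.pi_pos ?_
  rw [MeasureTheory.integral_pos_iff_support_of_nonneg
    (fun w => mul_nonneg (Mβ_nonneg β hβ w) (norm_nonneg _)) (integrable_M_mul β hβ 0)]
  set x : E3 := EuclideanSpace.single 0 (2:ℝ) with hx
  have hxn : ‖x‖ = 2 := by
    rw [hx, EuclideanSpace.norm_single]; norm_num
  have hball : Metric.ball x 1 ⊆ Function.support (fun w : E3 => Mβ β w * ‖(0:E3) - w‖) := by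
    intro w hw
    rw [Metric.mem_ball, dist_eq_norm] at hw
    have hwn : (0:ℝ) < ‖w‖ := by
      have := norm_sub_norm_le x w
      rw [norm_sub_rev] at hw
      linarith [hxn ▸ this]
    simp only [Function.mem_support, zero_sub, norm_neg]
    exact ne_of_gt (mul_pos (Mβ_pos β hβ w) hwn)
  calc (0:ENNReal) < volume (Metric.ball x 1) := Metric.measure_ball_pos _ _ one_pos
    _ ≤ _ := measure_mono hball
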